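/- Let NS be a lattice of signature (1, ρ−1) with ρ ≥ 2 (the Néron–Severi lattice of an abelian surface with rk NS ≥ 2). Fix ξ₀ ∈ NS, an element ξ of positive square with (ξ, h) > 0 for an ample class (i.e. ξ ample), r ∈ ℤ_{>0} and ℓ ∈ ℤ_{>0}. Then there exist k ∈ ℤ and η ∈ NS such that ξ₁ := ξ₀ + r(kξ + η) satisfies (ξ₁²) > 0 and √(2ℓ/(ξ₁²)) is irrational. -/

import Mathlib

/-- If `L, Q > 0` and `L * Q` is not a perfect square, then `√(L/Q)` is irrational. -/
lemma aux_irr_sqrt_ratio {L Q : ℤ} (hL : 0 < L) (hQ : 0 < Q) (hns : ¬ IsSquare (L * Q)) :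
    Irrational (Real.sqrt ((L : ℝ) / (Q : ℝ))) := by
  have hQR : (0:ℝ) < (Q:ℝ) := by exact_mod_cast hQ
  have h1 : (L : ℝ) / (Q : ℝ) = ((L * Q : ℤ) : ℝ) / ((Q:ℝ))^2 := by
    push_cast; field_simp
  have h2 : Real.sqrt ((L : ℝ) / (Q : ℝ)) = Real.sqrt ((L * Q : ℤ) : ℝ) / (Q : ℝ) := by
    rw [h1, Real.sqrt_div (by positivity), Real.sqrt_sq hQR.le]
  rw [h2]
  have hirr : Irrational (Real.sqrt ((L * Q : ℤ) : ℝ)) :=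
    (irrational_sqrt_intCast_iff_of_nonneg (by positivity)).mpr hns
  exact hirr.div_intCast hQ.ne'

/-- Two squares that differ by a fixed nonzero `Δ` are bounded by `Δ^2`. -/
lemma aux_sq_gap {x y Δ : ℤ} (hΔ : Δ ≠ 0) (hx : 0 ≤ x) (hy : 0 ≤ y)
    (hd : y * y - x * x = Δ) : x * x ≤ Δ ^ 2 := by
  have hne : y - x ≠ 0 := by
    intro h0
    apply hΔ
    have hyx : y = x := by linarith [sub_eq_zero.mp h0]
    nlinarith
  have h1 : 1 ≤ |y - x| := Int.one_le_abs hne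
  have h2 : |Δ| = |y - x| * (y + x) := by
    rw [← hd, show y * y - x * x = (y - x) * (y + x) by ring, abs_mul,
      abs_of_nonneg (by linarith : (0:ℤ) ≤ y + x)]
  have h3 : x ≤ |Δ| := by nlinarith [abs_nonneg (y - x)]
  calc x * x ≤ |Δ| * |Δ| := mul_le_mul h3 h3 hx (abs_nonneg Δ)
    _ = Δ ^ 2 := by rw [← abs_mul, abs_mul_self]; ring



/-- for a lattice `NS` of signature `(1, ρ−1)`, `ρ ≥ 2`
(the signature is encoded by `hsig`: any positive vector has an orthogonal
vector of negative square), `ξ₀ ∈ NS`, an ample class `ξ` (positive square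
and positive pairing with an ample `h`), and positive integers `r, ℓ`, there
are `k ∈ ℤ` and `η ∈ NS` with `ξ₁ := ξ₀ + r(kξ + η)` of positive square
such that `√(2ℓ/(ξ₁²))` is irrational. -/
theorem exists_irrational_square_ratio
    {N : Type*} [AddCommGroup N] [Module ℤ N] [NoZeroSMulDivisors ℤ N]
    (ip : N →ₗ[ℤ] N →ₗ[ℤ] ℤ) (hsymm : ∀ x y : N, ip x y = ip y x)
    (hsig : ∀ x : N, 0 < ip x x → ∃ η : N, ip x η = 0 ∧ ip η η < 0)
    (ξ₀ ξ h : N) (r ℓ : ℤ) (hr : 0 < r) (hℓ : 0 < ℓ)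
    (hξ : 0 < ip ξ ξ) (hh : 0 < ip h h) (hξh : 0 < ip ξ h) :
    ∃ (k : ℤ) (η : N),
      0 < ip (ξ₀ + r • (k • ξ + η)) (ξ₀ + r • (k • ξ + η)) ∧
      Irrational (Real.sqrt ((2 * (ℓ : ℝ)) /
        ((ip (ξ₀ + r • (k • ξ + η)) (ξ₀ + r • (k • ξ + η)) : ℤ) : ℝ))) := by
  obtain ⟨η₀, hoξ, hd⟩ := hsig ξ hξ
  set a : ℤ := ip ξ₀ ξ₀ with ha
  set b : ℤ := ip ξ₀ ξ with hb
  set e : ℤ := ip ξ₀ η₀ with he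
  set c : ℤ := ip ξ ξ with hc
  set d : ℤ := ip η₀ η₀ with hdd
  -- the quadratic form of ξ₁(k,m)
  have key : ∀ k m : ℤ,
      ip (ξ₀ + r • (k • ξ + m • η₀)) (ξ₀ + r • (k • ξ + m • η₀)) =
        a + 2*r*b*k + 2*r*e*m + r^2*c*k^2 + r^2*d*m^2 := by
    intro k m
    simp only [map_add, map_zsmul, LinearMap.add_apply, LinearMap.smul_apply, smul_eq_mul]
    rw [hsymm ξ ξ₀, hsymm η₀ ξ₀, hsymm η₀ ξ, hoξ]
    ring
  -- choose an auxiliary index m with nonzero Δ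
  obtain ⟨m, hΔ⟩ : ∃ m : ℤ, 2*ℓ*(2*r*e*m + r^2*d*m^2) ≠ 0 := by
    by_cases h2e : 2*e + r*d = 0
    · refine ⟨2, ?_⟩
      have hval : 2*ℓ*(2*r*e*2 + r^2*d*2^2) = 4*ℓ*r^2*d := by linear_combination (4*ℓ*r) * h2e
      rw [hval]
      have hlt : 4*ℓ*r^2*d < 0 := by nlinarith [mul_pos (mul_pos hℓ (pow_pos hr 2)) (neg_pos.2 hd)]
      exact hlt.ne
    · refine ⟨1, ?_⟩
      have hval : 2*ℓ*(2*r*e*1 + r^2*d*1^2) = 2*ℓ*r*(2*e + r*d) := by ring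
      rw [hval]
      exact mul_ne_zero (by positivity) h2e
  set Δ : ℤ := 2*ℓ*(2*r*e*m + r^2*d*m^2) with hΔdef
  -- choose k large
  set B : ℤ := |2*r*b| with hB
  set A0 : ℤ := |a| with hA0
  set Am : ℤ := |a + 2*r*e*m + r^2*d*m^2| with hAm
  set T : ℤ := Δ^2 with hT
  set k : ℤ := B + A0 + Am + T + 1 with hk
  have hT0 : 0 ≤ T := sq_nonneg Δ
  have hB0 : 0 ≤ B := abs_nonneg _
  have hA00 : 0 ≤ A0 := abs_nonneg _
  have hAm0 : 0 ≤ Am := abs_nonneg _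
  have hk1 : 1 ≤ k := by rw [hk]; linarith
  have hk0 : 0 ≤ k := by linarith
  have hrc : 1 ≤ r^2*c := by nlinarith
  have hkk : A0 + Am + T + 1 ≤ k^2 - B*k := by
    have h1 : k^2 - B*k = k*(A0+Am+T+1) := by rw [hk]; ring
    rw [h1]
    nlinarith [mul_nonneg (by linarith : (0:ℤ) ≤ k - 1) (by linarith : (0:ℤ) ≤ A0+Am+T+1)]
  have h2 : -(B*k) ≤ 2*r*b*k := by
    have h2' := mul_le_mul_of_nonneg_right (neg_abs_le (2*r*b)) hk0
    rw [← hB] at h2'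
    linarith [h2']
  have h3 : k^2 ≤ r^2*c*k^2 := by nlinarith [sq_nonneg k]
  have h1a : -A0 ≤ a := by
    have := neg_abs_le a
    rw [← hA0] at this; exact this
  have h1m : -Am ≤ a + 2*r*e*m + r^2*d*m^2 := by
    have := neg_abs_le (a + 2*r*e*m + r^2*d*m^2)
    rw [← hAm] at this; exact this
  have hQ0big : T < a + 2*r*b*k + 2*r*e*0 + r^2*c*k^2 + r^2*d*0^2 := by linarith
  have hQ0pos : 0 < a + 2*r*b*k + 2*r*e*0 + r^2*c*k^2 + r^2*d*0^2 := by linarith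
  have hQmpos : 0 < a + 2*r*b*k + 2*r*e*m + r^2*c*k^2 + r^2*d*m^2 := by linarith
  have hL2 : (0:ℤ) < 2*ℓ := by positivity
  have hcast : (2 : ℝ) * (ℓ:ℝ) = ((2*ℓ : ℤ) : ℝ) := by push_cast; ring
  by_cases hs0 : IsSquare (2*ℓ*(a + 2*r*b*k + 2*r*e*0 + r^2*c*k^2 + r^2*d*0^2))
  · -- then 2ℓ·Q(k,m) is not a square
    have hns : ¬ IsSquare (2*ℓ*(a + 2*r*b*k + 2*r*e*m + r^2*c*k^2 + r^2*d*m^2)) := by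
      rintro ⟨y, hy⟩
      obtain ⟨x, hx⟩ := hs0
      have hx' : 2*ℓ*(a + 2*r*b*k + 2*r*e*0 + r^2*c*k^2 + r^2*d*0^2) = |x| * |x| := by
        rw [abs_mul_abs_self]; exact hx
      have hy' : 2*ℓ*(a + 2*r*b*k + 2*r*e*m + r^2*c*k^2 + r^2*d*m^2) = |y| * |y| := by
        rw [abs_mul_abs_self]; exact hy
      have hgap : |x| * |x| ≤ Δ ^ 2 := by
        refine aux_sq_gap hΔ (abs_nonneg x) (abs_nonneg y) ?_
        rw [← hx', ← hy', hΔdef]; ring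
      have hxx : 2*(a + 2*r*b*k + 2*r*e*0 + r^2*c*k^2 + r^2*d*0^2) ≤ |x| * |x| := by
        have hmono : 0 ≤ (ℓ - 1) * (a + 2*r*b*k + 2*r*e*0 + r^2*c*k^2 + r^2*d*0^2) :=
          mul_nonneg (by linarith) hQ0pos.le
        rw [← hx']; linarith
      rw [← hT] at hgap
      linarith
    refine ⟨k, m • η₀, ?_, ?_⟩
    · rw [key k m]; exact hQmpos
    · rw [key k m, hcast]
      exact aux_irr_sqrt_ratio hL2 hQmpos hns
  · refine ⟨k, (0:ℤ) • η₀, ?_, ?_⟩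
    · rw [key k 0]; exact hQ0pos
    · rw [key k 0, hcast]
      exact aux_irr_sqrt_ratio hL2 hQ0pos hs0
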